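/- Assume 𝔟 < 𝔡 and let B ⊆ ℕ^ℕ be unbounded of cardinality 𝔟, f : ℕ^ℕ → X a perfect surjection onto a Polish space X. Then M = f(B) satisfies: every finite power M^m has the Menger property, and M is not contained in any σ-compact subset of X. -/

import Mathlib

open Filter Set Cardinal TopologicalSpace

/-- `s ≤* t`: eventual domination. -/
def EvLE (s t : ℕ → ℕ) : Prop := ∀ᶠ n in Filter.atTop, s n ≤ t n

/-- The Menger covering property. -/
def MengerSpace (X : Type*) [TopologicalSpace X] : Prop :=
  ∀ U : ℕ → Set (Set X), (∀ n, ∀ V ∈ U n, IsOpen V) → (∀ n, ⋃₀ U n = Set.univ) →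
    ∃ V : ℕ → Finset (Set X), (∀ n, ↑(V n) ⊆ U n) ∧
      (⋃ n, ⋃₀ (V n : Set (Set X))) = Set.univ

/-- The bounding number 𝔟. -/
noncomputable def bCard : Cardinal :=
  sInf {c | ∃ B : Set (ℕ → ℕ), Cardinal.mk B = c ∧ ¬ ∃ t, ∀ s ∈ B, EvLE s t}

/-- The dominating number 𝔡. -/
noncomputable def dCard : Cardinal :=
  sInf {c | ∃ D : Set (ℕ → ℕ), Cardinal.mk D = c ∧ ∀ s, ∃ t ∈ D, EvLE s t}

/-- Perfect map: continuous, closed, compact fibers. -/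
def IsPerfectMap {X Y : Type*} [TopologicalSpace X] [TopologicalSpace Y] (f : X → Y) : Prop :=
  Continuous f ∧ IsClosedMap f ∧ ∀ y, IsCompact (f ⁻¹' {y})

/-- A countable family is not dominating. -/
lemma countable_not_dominating (D : Set (ℕ → ℕ)) (hD : D.Countable) :
    ∃ s, ∀ t ∈ D, ¬ EvLE s t := by
  rcases D.eq_empty_or_nonempty with rfl | hne
  · exact ⟨0, by simp⟩
  obtain ⟨e, rfl⟩ := hD.exists_eq_range hne
  refine ⟨fun n => (Finset.range (n + 1)).sup (fun k => e k n) + 1, ?_⟩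
  rintro t ⟨k, rfl⟩ hEv
  obtain ⟨n, hle, hkn⟩ := (hEv.and (eventually_ge_atTop k)).exists
  have hle' : (Finset.range (n + 1)).sup (fun k => e k n) + 1 ≤ e k n := hle
  have : e k n ≤ (Finset.range (n + 1)).sup (fun k => e k n) :=
    Finset.le_sup (f := fun k => e k n) (Finset.mem_range.mpr (by omega))
  omega

lemma aleph0_le_dCard : ℵ₀ ≤ dCard := by
  refine le_csInf ⟨Cardinal.mk (Set.univ : Set (ℕ → ℕ)), Set.univ, rfl,
    fun s => ⟨s, mem_univ s, Eventually.of_forall fun n => le_rfl⟩⟩ ?_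
  rintro c ⟨D, rfl, hdom⟩
  by_contra hlt
  push_neg at hlt
  have hDc : D.Countable := by
    rw [← Set.countable_coe_iff, ← Cardinal.mk_le_aleph0_iff]
    exact hlt.le
  obtain ⟨s, hs⟩ := countable_not_dominating D hDc
  obtain ⟨t, htD, hts⟩ := hdom s
  exact hs t htD hts

/-- A family of size < 𝔡 is not dominating. -/
lemma not_dominating_of_mk_lt {α : Type} (g : α → ℕ → ℕ) (hα : Cardinal.mk α < dCard) :
    ∃ h : ℕ → ℕ, ∀ x, ¬ EvLE h (g x) := by
  by_contra hcon
  push_neg at hcon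
  have hdom : ∀ s, ∃ t ∈ Set.range g, EvLE s t := by
    intro s
    obtain ⟨x, hx⟩ := hcon s
    exact ⟨g x, ⟨x, rfl⟩, hx⟩
  have : dCard ≤ Cardinal.mk (Set.range g) :=
    csInf_le (OrderBot.bddBelow _) ⟨Set.range g, rfl, hdom⟩
  exact absurd (this.trans Cardinal.mk_range_le) (not_le.mpr hα)

/-- A second countable space of cardinality < 𝔡 is Menger. -/
lemma menger_of_mk_lt (Z : Type) [TopologicalSpace Z] [SecondCountableTopology Z]
    (hZ : Cardinal.mk Z < dCard) : MengerSpace Z := by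
  classical
  intro U hUopen hUcov
  obtain ⟨b, hbc, -, hb⟩ := exists_countable_basis Z
  obtain ⟨e, he⟩ := (hbc.insert ∅).exists_eq_range (insert_nonempty _ _)
  have hex : ∀ (x : Z) (n : ℕ), ∃ k, x ∈ e k ∧ ∃ S ∈ U n, e k ⊆ S := by
    intro x n
    have hx : x ∈ ⋃₀ U n := (hUcov n).symm ▸ mem_univ x
    obtain ⟨S, hS, hxS⟩ := hx
    obtain ⟨v, hvb, hxv, hvS⟩ := hb.exists_subset_of_mem_open hxS (hUopen n S hS)
    have : v ∈ Set.range e := he ▸ Set.mem_insert_of_mem _ hvb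
    obtain ⟨k, rfl⟩ := this
    exact ⟨k, hxv, S, hS, hvS⟩
  set g : Z → ℕ → ℕ := fun x n => Nat.find (hex x n) with hg
  obtain ⟨h, hh⟩ := not_dominating_of_mk_lt g hZ
  set c : ℕ → ℕ → Set Z := fun n k =>
    if hk : ∃ S ∈ U n, e k ⊆ S then hk.choose else ∅ with hc
  refine ⟨fun n => ((Finset.range (h n + 1)).filter
      (fun k => ∃ S ∈ U n, e k ⊆ S)).image (c n), ?_, ?_⟩
  · intro n S hS
    simp only [Finset.coe_image, Set.mem_image, Finset.mem_coe, Finset.mem_filter] at hS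
    obtain ⟨k, ⟨-, hk⟩, rfl⟩ := hS
    simp only [hc, dif_pos hk]
    exact hk.choose_spec.1
  · refine Set.eq_univ_of_forall fun x => ?_
    have : ∃ n, ¬ h n ≤ g x n := by
      have := hh x
      rw [EvLE, not_eventually] at this
      exact this.exists
    obtain ⟨n, hn⟩ := this
    have hglt : g x n < h n := by omega
    have hspec := Nat.find_spec (hex x n)
    set k := g x n with hkdef
    obtain ⟨hxk, hkU⟩ := hspec
    refine Set.mem_iUnion.mpr ⟨n, Set.mem_sUnion.mpr ⟨c n k, ?_, ?_⟩⟩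
    · simp only [Finset.coe_image, Set.mem_image, Finset.mem_coe, Finset.mem_filter,
        Finset.mem_range]
      exact ⟨k, ⟨by omega, hkU⟩, rfl⟩
    · simp only [hc, dif_pos hkU]
      split_ifs with h'
      · exact h'.choose_spec.2 hxk
      · exact absurd hkU h'

lemma mk_fun_lt {M : Type} (m : ℕ) (hM : Cardinal.mk M < dCard) :
    Cardinal.mk (Fin m → M) < dCard := by
  have hmk : Cardinal.mk (Fin m → M) = Cardinal.mk M ^ (m : Cardinal) := by
    rw [Cardinal.mk_arrow]
    simp
  rw [hmk]
  rcases lt_or_ge (Cardinal.mk M) ℵ₀ with hfin | hinf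
  · exact lt_of_lt_of_le (Cardinal.power_lt_aleph0 hfin (Cardinal.nat_lt_aleph0 m))
      aleph0_le_dCard
  · rcases Nat.eq_zero_or_pos m with rfl | hm
    · simpa using lt_of_lt_of_le Cardinal.one_lt_aleph0 aleph0_le_dCard
    · rw [Cardinal.power_natCast, Cardinal.power_nat_eq hinf hm]
      exact hM

theorem stmt_17 (X : Type) [TopologicalSpace X] [PolishSpace X]
    (hbd : bCard < dCard)
    (B : Set (ℕ → ℕ)) (hBunb : ¬ ∃ t, ∀ s ∈ B, EvLE s t) (hBcard : Cardinal.mk B = bCard)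
    (f : (ℕ → ℕ) → X) (hf : IsPerfectMap f) (hsurj : Function.Surjective f) :
    (∀ m : ℕ, MengerSpace (Fin m → ↥(f '' B))) ∧
      ¬ ∃ K : Set X, IsSigmaCompact K ∧ f '' B ⊆ K := by
  constructor
  · intro m
    refine menger_of_mk_lt _ (mk_fun_lt m ?_)
    calc Cardinal.mk (f '' B) ≤ Cardinal.mk B := Cardinal.mk_image_le
      _ = bCard := hBcard
      _ < dCard := hbd
  · rintro ⟨K, ⟨C, hCc, rfl⟩, hsub⟩
    have hprop : IsProperMap f :=
      isProperMap_iff_isClosedMap_and_compact_fibers.mpr ⟨hf.1, hf.2.1, hf.2.2⟩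
    have hbdd : ∀ n j, ∃ b, ∀ s ∈ f ⁻¹' C n, s j ≤ b := by
      intro n j
      have hcomp : IsCompact ((fun s : ℕ → ℕ => s j) '' (f ⁻¹' C n)) :=
        (hprop.isCompact_preimage (hCc n)).image (continuous_apply j)
      obtain ⟨b, hb⟩ := hcomp.bddAbove
      exact ⟨b, fun s hs => hb (Set.mem_image_of_mem _ hs)⟩
    choose t ht using hbdd
    refine hBunb ⟨fun j => (Finset.range (j + 1)).sup (fun k => t k j), fun s hs => ?_⟩
    have : f s ∈ ⋃ n, C n := hsub (Set.mem_image_of_mem f hs)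
    obtain ⟨n, hn⟩ := Set.mem_iUnion.mp this
    filter_upwards [eventually_ge_atTop n] with j hj
    calc s j ≤ t n j := ht n j s hn
      _ ≤ _ := Finset.le_sup (f := fun k => t k j) (Finset.mem_range.mpr (by omega))
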